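/- Let D be a positive integer, q : Fin D → ℝ, and let H, K : ℝ → Matrix (Fin D) (Fin D) ℝ and n : ℝ → ℝ. For t > 0 set H̃(t) := Matrix.diagonal (fun i => t^{−2 q_i}) and K̃(t) := −t^{−1}·Matrix.diagonal q. Suppose that at some t₀ > 0 the map H is differentiable with (H'(t₀))_{ij} = 2 n(t₀) ∑_a (H(t₀))_{ia} (K(t₀))_{ja} for all i, j. Then for all indices i, j, the function t ↦ t^{2 q_j}·((H(t))_{ij} − (H̃(t))_{ij}) is differentiable at t₀ with derivative equal to 2 t₀^{2 q_j} ∑_a ((H(t₀))_{ia} − (H̃(t₀))_{ia})·((K(t₀))_{ja} − (K̃(t₀))_{ja}) + 2 t₀^{−2 q_i + 2 q_j}·((K(t₀))_{ji} − (K̃(t₀))_{ji}) + 2 t₀^{2 q_j} (n(t₀) − 1) ∑_a (H(t₀))_{ia}(K(t₀))_{ja}. -/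

import Mathlib

/-- Equation (6.2b) of the paper: if at `t₀ > 0` the inverse-metric components
satisfy the CMC evolution equation `(∂_t g⁻¹)^{ij} = 2 n g^{ia} K^j_a`, then
the rescaled difference `t^(2qⱼ)(g^{ij} - g̃^{ij})` from the inverse Kasner
metric `g̃⁻¹(t) = diag(t^(-2qᵢ))` is differentiable at `t₀` with derivative
`2 t₀^(2qⱼ) ∑_a (g⁻¹-g̃⁻¹)^{ia}(K-K̃)^j_a + 2 t₀^(-2qᵢ+2qⱼ)(K-K̃)^j_i
  + 2 t₀^(2qⱼ)(n-1) g^{ia}K^j_a`, where `K̃(t) = -t⁻¹ • diag q`. -/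
theorem inverse_metric_difference_evolution (D : ℕ) (hD : 0 < D)
    (q : Fin D → ℝ)
    (H K : ℝ → Matrix (Fin D) (Fin D) ℝ) (n : ℝ → ℝ) (t₀ : ℝ) (ht₀ : 0 < t₀)
    (hH : ∀ i j, HasDerivAt (fun t => H t i j)
      (2 * n t₀ * ∑ a, H t₀ i a * K t₀ j a) t₀) :
    ∀ i j, HasDerivAt
      (fun t => t ^ (2 * q j) *
        (H t i j - Matrix.diagonal (fun k => t ^ (-(2 * q k))) i j))
      (2 * t₀ ^ (2 * q j) *
          (∑ a, (H t₀ i a - Matrix.diagonal (fun k => t₀ ^ (-(2 * q k))) i a) *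
            (K t₀ j a -
              (-(t₀⁻¹) • Matrix.diagonal q : Matrix (Fin D) (Fin D) ℝ) j a)) +
        2 * t₀ ^ (-(2 * q i) + 2 * q j) *
          (K t₀ j i -
            (-(t₀⁻¹) • Matrix.diagonal q : Matrix (Fin D) (Fin D) ℝ) j i) +
        2 * t₀ ^ (2 * q j) * (n t₀ - 1) * ∑ a, H t₀ i a * K t₀ j a) t₀ := by
  intro i j
  have hpow : HasDerivAt (fun t : ℝ => t ^ (2 * q j))
      (2 * q j * t₀ ^ (2 * q j - 1)) t₀ :=
    Real.hasDerivAt_rpow_const (Or.inl ht₀.ne')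
  have hmain : HasDerivAt
      (fun t => t ^ (2 * q j) * H t i j - (if i = j then (1:ℝ) else 0))
      (2 * q j * t₀ ^ (2 * q j - 1) * H t₀ i j +
        t₀ ^ (2 * q j) * (2 * n t₀ * ∑ a, H t₀ i a * K t₀ j a)) t₀ :=
    (hpow.mul (hH i j)).sub_const _
  have heq : (fun t => t ^ (2 * q j) * H t i j - (if i = j then (1:ℝ) else 0))
      =ᶠ[nhds t₀] (fun t => t ^ (2 * q j) *
        (H t i j - Matrix.diagonal (fun k => t ^ (-(2 * q k))) i j)) := by
    filter_upwards [Ioi_mem_nhds ht₀] with t ht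
    rcases eq_or_ne i j with rfl | hij
    · simp only [Matrix.diagonal_apply_eq, mul_sub, if_true]
      rw [← Real.rpow_add ht]
      simp
    · simp [Matrix.diagonal_apply_ne _ hij, hij]
  have hder := hmain.congr_of_eventuallyEq heq.symm
  refine hder.congr_deriv ?_
  have hr1 : t₀ ^ (2 * q j - 1) = t₀ ^ (2 * q j) * t₀⁻¹ := by
    rw [Real.rpow_sub ht₀, Real.rpow_one, div_eq_mul_inv]
  have hr2 : t₀ ^ (-(2 * q i) + 2 * q j) = t₀ ^ (-(2 * q i)) * t₀ ^ (2 * q j) :=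
    Real.rpow_add ht₀ _ _
  have hS : (∑ a, (H t₀ i a - Matrix.diagonal (fun k => t₀ ^ (-(2 * q k))) i a) *
      (K t₀ j a - (-(t₀⁻¹) • Matrix.diagonal q : Matrix (Fin D) (Fin D) ℝ) j a))
      = (∑ a, H t₀ i a * K t₀ j a) + t₀⁻¹ * q j * H t₀ i j
        - t₀ ^ (-(2 * q i)) * K t₀ j i
        - (if i = j then t₀ ^ (-(2 * q i)) * t₀⁻¹ * q j else 0) := by
    simp only [Matrix.diagonal_apply, Matrix.smul_apply, smul_eq_mul, sub_mul,
      mul_sub, Finset.sum_sub_distrib, mul_ite, ite_mul, mul_zero, zero_mul,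
      Finset.sum_ite_eq, Finset.sum_ite_eq', Finset.mem_univ, if_true]
    rcases eq_or_ne i j with rfl | hij
    · simp; ring
    · simp [hij, Ne.symm hij]
      ring
  rw [hS, hr1, hr2]
  rcases eq_or_ne i j with rfl | hij
  · simp only [Matrix.smul_apply, Matrix.diagonal_apply_eq, smul_eq_mul, if_true]
    ring
  · simp only [Matrix.smul_apply, Matrix.diagonal_apply_ne _ (Ne.symm hij),
      smul_eq_mul, if_neg hij, mul_zero, sub_zero]
    ring
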